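/- Let k, r be positive integers and u < v real. For the function g(x) = x^{k+r}/(k+r)!, writing M(u,v) = (g(v)-g(u))/(v-u) and _iM_j = ∂^{i+j}M/∂u^i∂v^j, one has C(k+r-2, k-1) · _{r-1}M_{k-1}(u,v) = (1/(k+r-1)) · (r·u + k·v)/(k+r). -/

import Mathlib

open Filter Set Topology

/-- Mixed partial derivative `∂^{i+j} M / ∂u^i ∂v^j` of `M(u,v) = (g v - g u)/(v-u)`. -/
noncomputable def Mmix (g : ℝ → ℝ) (i j : ℕ) (u v : ℝ) : ℝ :=
  iteratedDeriv i (fun u' => iteratedDeriv j (fun v' => (g v' - g u') / (v' - u')) v) u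

private lemma desc_front (m j : ℕ) :
    m.descFactorial (j + 1) = m * (m - 1).descFactorial j := by
  cases m with
  | zero => simp
  | succ m => rw [Nat.succ_descFactorial_succ]; simp

private lemma itd_csum (j : ℕ) (s : Finset ℕ) (c : ℕ → ℝ) (m : ℕ → ℕ) (x : ℝ) :
    iteratedDeriv j (fun y : ℝ => ∑ i ∈ s, c i * y ^ m i) x
      = ∑ i ∈ s, c i * ((m i).descFactorial j : ℝ) * x ^ (m i - j) := by
  induction j generalizing c m with
  | zero => simp
  | succ j ih =>
    rw [iteratedDeriv_succ']
    have hder : deriv (fun y : ℝ => ∑ i ∈ s, c i * y ^ m i)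
        = fun y => ∑ i ∈ s, (c i * m i) * y ^ (m i - 1) := by
      funext y
      rw [deriv_fun_sum (fun i _ => ((differentiable_pow (m i)).differentiableAt).const_mul (c i))]
      refine Finset.sum_congr rfl fun i _ => ?_
      rw [deriv_const_mul_field, deriv_pow_field]
      ring
    rw [hder, ih (fun i => c i * m i) (fun i => m i - 1)]
    refine Finset.sum_congr rfl fun i _ => ?_
    rw [show m i - 1 - j = m i - (j + 1) from by omega, desc_front (m i) j]
    push_cast
    ring

/-- for `g(x) = x^{k+r}/(k+r)!`,
`C(k+r-2, k-1) · _{r-1}M_{k-1}(u,v) = (1/(k+r-1)) · (ru + kv)/(k+r)`. -/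
theorem stmt12 (k r : ℕ) (hk : 1 ≤ k) (hr : 1 ≤ r) (u v : ℝ) (huv : u < v) :
    ((k + r - 2).choose (k - 1) : ℝ) *
        Mmix (fun x => x ^ (k + r) / ((k + r).factorial : ℝ)) (r - 1) (k - 1) u v =
      (1 / ((k : ℝ) + r - 1)) * (((r : ℝ) * u + k * v) / ((k : ℝ) + r)) := by
  obtain ⟨K, rfl⟩ : ∃ K, k = K + 1 := ⟨k - 1, by omega⟩
  obtain ⟨R, rfl⟩ : ∃ R, r = R + 1 := ⟨r - 1, by omega⟩
  have e1 : K + 1 + (R + 1) - 2 = K + R := by omega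
  have e2 : K + 1 - 1 = K := by omega
  have e3 : R + 1 - 1 = R := by omega
  have e4 : K + 1 + (R + 1) = K + R + 2 := by omega
  rw [e1, e2, e3, e4]
  set n : ℕ := K + R + 2 with hn
  have hfac : ((n.factorial : ℝ)) ≠ 0 := Nat.cast_ne_zero.mpr n.factorial_ne_zero
  -- Step 1: inner iterated derivative for u' < v
  have hF : ∀ u' ∈ Set.Iio v,
      iteratedDeriv K (fun v' => (v' ^ n / (n.factorial : ℝ) - u' ^ n / n.factorial) / (v' - u')) v
        = ∑ i ∈ Finset.range n,
            (u' ^ (n - 1 - i) / n.factorial) * ((i.descFactorial K : ℝ)) * v ^ (i - K) := by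
    intro u' hu'
    have hne : u' ≠ v := ne_of_lt hu'
    have heq : (fun v' : ℝ => (v' ^ n / (n.factorial : ℝ) - u' ^ n / n.factorial) / (v' - u'))
        =ᶠ[𝓝 v] (fun v' => ∑ i ∈ Finset.range n, (u' ^ (n - 1 - i) / n.factorial) * v' ^ i) := by
      filter_upwards [isOpen_compl_singleton.mem_nhds
        (by simpa using hne.symm : v ∈ ({u'}ᶜ : Set ℝ))] with v' hv'
      have hv'ne : v' - u' ≠ 0 := sub_ne_zero.mpr (by simpa using hv')
      have hgs : (∑ i ∈ Finset.range n, v' ^ i * u' ^ (n - 1 - i)) * (v' - u')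
          = v' ^ n - u' ^ n := geom_sum₂_mul v' u' n
      rw [div_sub_div_same, ← hgs]
      rw [show (∑ i ∈ Finset.range n, v' ^ i * u' ^ (n - 1 - i)) * (v' - u') / ↑n.factorial / (v' - u')
          = (∑ i ∈ Finset.range n, v' ^ i * u' ^ (n - 1 - i)) / n.factorial from by
        field_simp]
      rw [Finset.sum_div]
      exact Finset.sum_congr rfl fun i _ => by ring
    rw [Filter.EventuallyEq.iteratedDeriv_eq K heq,
      itd_csum K (Finset.range n) (fun i => u' ^ (n - 1 - i) / n.factorial) (fun i => i) v]
  -- Step 2: outer iterated derivative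
  have houter : (fun u' => iteratedDeriv K
        (fun v' => (v' ^ n / (n.factorial : ℝ) - u' ^ n / n.factorial) / (v' - u')) v)
      =ᶠ[𝓝 u] (fun u' => ∑ i ∈ Finset.range n,
          ((i.descFactorial K : ℝ) * v ^ (i - K) / n.factorial) * u' ^ (n - 1 - i)) := by
    filter_upwards [Iio_mem_nhds huv] with u' hu'
    rw [hF u' hu']
    exact Finset.sum_congr rfl fun i _ => by ring
  have hM : Mmix (fun x => x ^ n / (n.factorial : ℝ)) R K u v
      = ∑ i ∈ Finset.range n,
          (i.descFactorial K : ℝ) * v ^ (i - K) / n.factorial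
            * (((n - 1 - i).descFactorial R : ℝ)) * u ^ (n - 1 - i - R) := by
    rw [Mmix]
    rw [Filter.EventuallyEq.iteratedDeriv_eq R houter,
      itd_csum R (Finset.range n)
        (fun i => (i.descFactorial K : ℝ) * v ^ (i - K) / n.factorial) (fun i => n - 1 - i) u]
  -- Step 3: the sum has only two nonzero terms
  have hsub : ({K, K + 1} : Finset ℕ) ⊆ Finset.range n := by
    intro i hi
    simp only [Finset.mem_insert, Finset.mem_singleton] at hi
    rcases hi with rfl | rfl <;> simp [hn] <;> omega
  have hzero : ∀ i ∈ Finset.range n, i ∉ ({K, K + 1} : Finset ℕ) →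
      (i.descFactorial K : ℝ) * v ^ (i - K) / n.factorial
        * (((n - 1 - i).descFactorial R : ℝ)) * u ^ (n - 1 - i - R) = 0 := by
    intro i hi hnot
    simp only [Finset.mem_insert, Finset.mem_singleton] at hnot
    push_neg at hnot
    rcases Nat.lt_or_ge i K with h | h
    · rw [Nat.descFactorial_eq_zero_iff_lt.mpr h]; simp
    · have h2 : n - 1 - i < R := by
        simp only [Finset.mem_range] at hi
        omega
      rw [Nat.descFactorial_eq_zero_iff_lt.mpr h2]; simp
  have hsum : ∑ i ∈ Finset.range n,
      (i.descFactorial K : ℝ) * v ^ (i - K) / n.factorial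
        * (((n - 1 - i).descFactorial R : ℝ)) * u ^ (n - 1 - i - R)
      = (K.descFactorial K : ℝ) * v ^ (K - K) / n.factorial
          * (((n - 1 - K).descFactorial R : ℝ)) * u ^ (n - 1 - K - R)
        + ((K + 1).descFactorial K : ℝ) * v ^ (K + 1 - K) / n.factorial
          * (((n - 1 - (K + 1)).descFactorial R : ℝ)) * u ^ (n - 1 - (K + 1) - R) := by
    rw [← Finset.sum_subset hsub hzero, Finset.sum_insert (by simp), Finset.sum_singleton]
  rw [hM, hsum]
  -- Step 4: arithmetic
  rw [show n - 1 - K = R + 1 from by omega, show R + 1 - R = 1 from by omega,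
    show K - K = 0 from by omega, show K + 1 - K = 1 from by omega,
    show n - 1 - (K + 1) = R from by omega, show R - R = 0 from by omega]
  rw [Nat.descFactorial_self, Nat.descFactorial_self,
    Nat.descFactorial_eq_factorial_mul_choose (R + 1) R,
    Nat.descFactorial_eq_factorial_mul_choose (K + 1) K,
    Nat.choose_succ_self_right, Nat.choose_succ_self_right]
  have hch : ((K + R).choose K : ℝ) * K.factorial * R.factorial = (K + R).factorial := by
    have h := Nat.choose_mul_factorial_mul_factorial (Nat.le_add_right K R)
    rw [show K + R - K = R from by omega] at h
    exact_mod_cast h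
  have hfac2 : ((n.factorial : ℝ)) = (K + R + 2) * (K + R + 1) * (K + R).factorial := by
    rw [hn, show K + R + 2 = (K + R + 1) + 1 from rfl, Nat.factorial_succ, Nat.factorial_succ]
    push_cast
    ring
  have hK : ((K + R : ℝ) + 1) ≠ 0 := by positivity
  have hK2 : ((K + R : ℝ) + 2) ≠ 0 := by positivity
  have hKf : ((K + R).factorial : ℝ) ≠ 0 := Nat.cast_ne_zero.mpr (K + R).factorial_ne_zero
  rw [hfac2]
  push_cast
  push_cast at hch
  rw [show (K : ℝ) + 1 + ((R : ℝ) + 1) - 1 = (K : ℝ) + R + 1 from by ring,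
    show (K : ℝ) + 1 + ((R : ℝ) + 1) = (K : ℝ) + R + 2 from by ring]
  field_simp
  linear_combination (((R : ℝ) + 1) * u + ((K : ℝ) + 1) * v) * hch
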